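/- Fix a positive definite matrix M. For any subsets A, B ⊆ {1,...,n} with A ≠ B, the subspaces H_A and H_B of square-integrable R^q-valued random vectors of the form g(X_i : i ∈ A) with E[g] = 0 and with all conditional expectations onto proper subsets vanishing, are orthogonal with respect to the inner product ⟨X,Y⟩ = E[Xᵀ M Y], when X_1,...,X_n are independent. -/

import Mathlib

open MeasureTheory ProbabilityTheory Finset Matrix

section Aux

variable {Ω : Type*} [mΩ : MeasurableSpace Ω] {μ : Measure Ω}

lemma my_indepFun_of_measurable {β γ : Type*} [MeasurableSpace β] [MeasurableSpace γ]
    {m₁ m₂ : MeasurableSpace Ω} (h : Indep m₁ m₂ μ)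
    {f : Ω → β} {g : Ω → γ} (hf : Measurable[m₁] f) (hg : Measurable[m₂] g) :
    IndepFun f g μ := by
  rw [indepFun_iff_measure_inter_preimage_eq_mul]
  intro s t hs ht
  exact (Indep_iff _ _ _).mp h _ _ (hf hs) (hg ht)

lemma my_integrable_mul {f g : Ω → ℝ} (hf : MemLp f 2 μ) (hg : MemLp g 2 μ) :
    Integrable (fun ω => f ω * g ω) μ := by
  have h : MemLp (f • g) 1 μ :=
    hg.smul hf
  rw [memLp_one_iff_integrable] at h
  exact h

/-- Key lemma: if `m ≤ m₁`, `m₁ ⟂ m₂` and `f` is `m₁`-measurable, then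
`μ[f | m ⊔ m₂] = μ[f | m]`. -/
lemma my_condexp_indep_sup {Ω' : Type*} {m' m₁ m₂ : MeasurableSpace Ω'}
    [mΩ : MeasurableSpace Ω'] {μ : Measure Ω'} [IsProbabilityMeasure μ]
    (hm : m' ≤ m₁) (hm₁ : m₁ ≤ mΩ) (hm₂ : m₂ ≤ mΩ)
    (hindep : Indep m₁ m₂ μ) {f : Ω' → ℝ} (hf : Integrable f μ)
    (hfm : StronglyMeasurable[m₁] f) :
    μ[f | m' ⊔ m₂] =ᵐ[μ] μ[f | m'] := by
  have hm'Ω : m' ≤ mΩ := hm.trans hm₁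
  have hle : m' ⊔ m₂ ≤ mΩ := sup_le hm'Ω hm₂
  set C : Set (Set Ω') :=
    {u | ∃ s t, MeasurableSet[m'] s ∧ MeasurableSet[m₂] t ∧ u = s ∩ t} with hC
  have h_eq : m' ⊔ m₂ = MeasurableSpace.generateFrom C := by
    refine le_antisymm (sup_le ?_ ?_) (MeasurableSpace.generateFrom_le ?_)
    · intro s hs
      exact MeasurableSpace.measurableSet_generateFrom
        ⟨s, Set.univ, hs, MeasurableSet.univ, (Set.inter_univ s).symm⟩
    · intro t ht
      exact MeasurableSpace.measurableSet_generateFrom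
        ⟨Set.univ, t, MeasurableSet.univ, ht, (Set.univ_inter t).symm⟩
    · rintro u ⟨s, t, hs, ht, rfl⟩
      exact ((le_sup_left : m' ≤ m' ⊔ m₂) s hs).inter ((le_sup_right : m₂ ≤ m' ⊔ m₂) t ht)
  have h_pi : IsPiSystem C := by
    rintro u ⟨s₁, t₁, hs₁, ht₁, rfl⟩ v ⟨s₂, t₂, hs₂, ht₂, rfl⟩ -
    exact ⟨s₁ ∩ s₂, t₁ ∩ t₂, hs₁.inter hs₂, ht₁.inter ht₂, by
      rw [Set.inter_inter_inter_comm]⟩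
  -- The main set-integral identity on sets of the π-system
  have hbase : ∀ (h : Ω' → ℝ), Integrable h μ → StronglyMeasurable[m₁] h →
      ∀ s t : Set Ω', MeasurableSet[m'] s → MeasurableSet[m₂] t →
      ∫ x in s ∩ t, h x ∂μ = (∫ x in s, h x ∂μ) * (μ t).toReal := by
    intro h hint hmeas s t hs ht
    have hs₁ : MeasurableSet[m₁] s := hm s hs
    have hsΩ : MeasurableSet[mΩ] s := hm₁ s hs₁
    have htΩ : MeasurableSet[mΩ] t := hm₂ t ht
    have hprod : ∀ x, (s ∩ t).indicator h x
        = s.indicator h x * t.indicator (fun _ => (1 : ℝ)) x := by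
      intro x
      by_cases hxs : x ∈ s <;> by_cases hxt : x ∈ t <;>
        simp [Set.indicator_apply, hxs, hxt, Set.mem_inter_iff]
    have hIndep : IndepFun (_mΩ := mΩ) (s.indicator h) (t.indicator fun _ => (1 : ℝ)) μ :=
      my_indepFun_of_measurable hindep (hmeas.measurable.indicator hs₁)
        (measurable_const.indicator ht)
    calc ∫ x in s ∩ t, h x ∂μ = ∫ x, (s ∩ t).indicator h x ∂μ :=
          (integral_indicator (hsΩ.inter htΩ)).symm
      _ = ∫ x, s.indicator h x * t.indicator (fun _ => (1 : ℝ)) x ∂μ := by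
          exact integral_congr_ae (Filter.Eventually.of_forall hprod)
      _ = (∫ x, s.indicator h x ∂μ) * ∫ x, t.indicator (fun _ => (1 : ℝ)) x ∂μ :=
          IndepFun.integral_fun_mul_eq_mul_integral hIndep (hint.indicator hsΩ).aestronglyMeasurable
            ((integrable_const (1 : ℝ)).indicator htΩ).aestronglyMeasurable
      _ = (∫ x in s, h x ∂μ) * (μ t).toReal := by
          rw [integral_indicator hsΩ, integral_indicator htΩ, setIntegral_const, smul_eq_mul,
            mul_one]
          rfl
  have key : ∀ u : Set Ω', MeasurableSet[m' ⊔ m₂] u →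
      ∫ x in u, (μ[f | m']) x ∂μ = ∫ x in u, f x ∂μ := by
    refine fun u hu => MeasurableSpace.induction_on_inter (m := m' ⊔ m₂)
      (C := fun u _ => ∫ x in u, (μ[f | m']) x ∂μ = ∫ x in u, f x ∂μ)
      h_eq h_pi ?_ ?_ ?_ ?_ u hu
    · simp
    · rintro v ⟨s, t, hs, ht, rfl⟩
      rw [hbase f hf hfm s t hs ht,
        hbase (μ[f | m']) integrable_condExp
          ((stronglyMeasurable_condExp (m := m')).mono hm) s t hs ht,
        setIntegral_condExp hm'Ω hf hs]
    · intro v hv ih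
      have hvΩ : MeasurableSet[mΩ] v := hle v hv
      have h1 := integral_add_compl hvΩ (integrable_condExp : Integrable (μ[f | m']) μ)
      have h2 := integral_add_compl hvΩ hf
      have h3 : ∫ x, (μ[f | m']) x ∂μ = ∫ x, f x ∂μ := integral_condExp hm'Ω
      linarith
    · intro g hdisj hmeas ih
      have hgΩ : ∀ i, MeasurableSet[mΩ] (g i) := fun i => hle _ (hmeas i)
      rw [integral_iUnion hgΩ hdisj integrable_condExp.integrableOn,
        integral_iUnion hgΩ hdisj hf.integrableOn]
      exact tsum_congr ih
  exact (ae_eq_condExp_of_forall_setIntegral_eq hle hf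
    (fun s _ _ => integrable_condExp.integrableOn)
    (fun s hs _ => key s hs)
    ⟨μ[f | m'], stronglyMeasurable_condExp.mono le_sup_left, Filter.EventuallyEq.rfl⟩).symm

set_option maxHeartbeats 1000000 in
/-- Scalar core : if `A ∩ B ⊊ A` then `E[f g] = 0`. -/
lemma my_scalar_core {E : Type*} [MeasurableSpace E]
    [IsProbabilityMeasure μ] {n : ℕ}
    {X : Fin n → Ω → E} (hXmeas : ∀ i, Measurable (X i))
    (hindep : iIndepFun X μ)
    {A B : Finset (Fin n)} (hAB : A ∩ B ⊂ A)
    {f g : Ω → ℝ} (hf2 : MemLp f 2 μ) (hg2 : MemLp g 2 μ)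
    (hfm : Measurable[⨆ i ∈ A, MeasurableSpace.comap (X i) inferInstance] f)
    (hgm : Measurable[⨆ i ∈ B, MeasurableSpace.comap (X i) inferInstance] g)
    (hfproj : μ[f | ⨆ i ∈ A ∩ B, MeasurableSpace.comap (X i) inferInstance]
        =ᵐ[μ] fun _ => (0 : ℝ)) :
    ∫ ω, f ω * g ω ∂μ = 0 := by
  set m : Fin n → MeasurableSpace Ω :=
    fun i => MeasurableSpace.comap (X i) inferInstance with hm
  have hmle : ∀ i, m i ≤ mΩ := fun i => (hXmeas i).comap_le
  have hAle : (⨆ i ∈ A, m i) ≤ mΩ := iSup₂_le fun i _ => hmle i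
  have hBle : (⨆ i ∈ B, m i) ≤ mΩ := iSup₂_le fun i _ => hmle i
  -- split σ(B) as σ(A∩B) ⊔ σ(B\A)
  have hsplit : (⨆ i ∈ B, m i) = (⨆ i ∈ A ∩ B, m i) ⊔ (⨆ i ∈ B \ A, m i) := by
    apply le_antisymm
    · refine iSup₂_le fun i hi => ?_
      by_cases h : i ∈ A
      · exact le_trans (le_biSup m (Finset.mem_inter.2 ⟨h, hi⟩)) le_sup_left
      · exact le_trans (le_biSup m (Finset.mem_sdiff.2 ⟨hi, h⟩)) le_sup_right
    · exact sup_le (biSup_mono fun i hi => (Finset.mem_inter.1 hi).2)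
        (biSup_mono fun i hi => (Finset.mem_sdiff.1 hi).1)
  -- independence of σ(A) and σ(B\A)
  have hdisj : Disjoint (↑A : Set (Fin n)) (↑(B \ A) : Set (Fin n)) := by
    rw [Set.disjoint_left]
    intro i hi hi'
    exact (Finset.mem_sdiff.1 hi').2 hi
  have hIndep : Indep (⨆ i ∈ A, m i) (⨆ i ∈ B \ A, m i) μ := by
    have h := indep_iSup_of_disjoint (m := m) hmle hindep.iIndep hdisj
    simpa using h
  have hfint : Integrable f μ := hf2.integrable one_le_two
  have hgint : Integrable g μ := hg2.integrable one_le_two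
  have hfgint : Integrable (fun ω => g ω * f ω) μ := my_integrable_mul hg2 hf2
  -- conditional expectation of f on σ(B) vanishes
  have hcond : μ[f | ⨆ i ∈ B, m i] =ᵐ[μ] fun _ => (0 : ℝ) := by
    rw [hsplit]
    have h1 := my_condexp_indep_sup (m' := ⨆ i ∈ A ∩ B, m i) (m₁ := ⨆ i ∈ A, m i)
      (m₂ := ⨆ i ∈ B \ A, m i) (biSup_mono fun i hi => (Finset.mem_inter.1 hi).1)
      hAle (iSup₂_le fun i _ => hmle i) hIndep hfint hfm.stronglyMeasurable
    exact h1.trans hfproj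
  have hmul : μ[(fun ω => g ω * f ω) | ⨆ i ∈ B, m i]
      =ᵐ[μ] g * μ[f | ⨆ i ∈ B, m i] :=
    condExp_mul_of_stronglyMeasurable_left hgm.stronglyMeasurable hfgint hfint
  have hzero : μ[(fun ω => g ω * f ω) | ⨆ i ∈ B, m i] =ᵐ[μ] fun _ => (0 : ℝ) := by
    filter_upwards [hmul, hcond] with ω h1 h2
    simp [h1, h2]
  calc ∫ ω, f ω * g ω ∂μ = ∫ ω, g ω * f ω ∂μ := by
        exact integral_congr_ae (Filter.Eventually.of_forall fun ω => mul_comm _ _)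
    _ = ∫ ω, (μ[(fun ω => g ω * f ω) | ⨆ i ∈ B, m i]) ω ∂μ := (integral_condExp hBle).symm
    _ = ∫ ω, (0 : ℝ) ∂μ := integral_congr_ae hzero
    _ = 0 := integral_zero _ _

end Aux

/-- For independent `X_1, ..., X_n` and `A ≠ B`, the spaces `H_A`, `H_B` of square-integrable
`ℝ^q`-valued random vectors that are functions of `(X_i : i ∈ A)` (resp. `B`) whose conditional
expectations onto every proper subset vanish, are orthogonal for `⟨X, Y⟩ = E[Xᵀ M Y]`,
`M` positive definite. -/
theorem stmt4 {Ω E : Type*} [mΩ : MeasurableSpace Ω] [MeasurableSpace E]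
    (μ : Measure Ω) [IsProbabilityMeasure μ] (n q : ℕ)
    (M : Matrix (Fin q) (Fin q) ℝ) (hM : M.PosDef)
    (X : Fin n → Ω → E) (hXmeas : ∀ i, Measurable (X i))
    (hindep : iIndepFun X μ)
    (A B : Finset (Fin n)) (hAB : A ≠ B)
    (gA gB : Ω → Fin q → ℝ)
    (hgA2 : ∀ r : Fin q, MemLp (fun ω => gA ω r) 2 μ)
    (hgB2 : ∀ r : Fin q, MemLp (fun ω => gB ω r) 2 μ)
    (hgAmeas : ∀ r : Fin q,
      Measurable[⨆ i ∈ A, MeasurableSpace.comap (X i) inferInstance] (fun ω => gA ω r))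
    (hgBmeas : ∀ r : Fin q,
      Measurable[⨆ i ∈ B, MeasurableSpace.comap (X i) inferInstance] (fun ω => gB ω r))
    (hgAproj : ∀ A' : Finset (Fin n), A' ⊂ A → ∀ r : Fin q,
      μ[(fun ω => gA ω r) | ⨆ i ∈ A', MeasurableSpace.comap (X i) inferInstance]
        =ᵐ[μ] fun _ => (0 : ℝ))
    (hgBproj : ∀ B' : Finset (Fin n), B' ⊂ B → ∀ r : Fin q,
      μ[(fun ω => gB ω r) | ⨆ i ∈ B', MeasurableSpace.comap (X i) inferInstance]
        =ᵐ[μ] fun _ => (0 : ℝ)) :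
    ∫ ω, (gA ω) ⬝ᵥ (M *ᵥ gB ω) ∂μ = 0 := by
  -- the scalar orthogonality
  have hzero : ∀ r s : Fin q, ∫ ω, gA ω r * gB ω s ∂μ = 0 := by
    intro r s
    by_cases hA : A ∩ B ⊂ A
    · exact my_scalar_core hXmeas hindep hA (hgA2 r) (hgB2 s) (hgAmeas r) (hgBmeas s)
        (hgAproj _ hA r)
    · have hsub : A ⊆ B := by
        intro i hi
        by_contra h
        exact hA ⟨Finset.inter_subset_left, fun hss =>
          h (Finset.mem_inter.1 (hss hi)).2⟩
      have hAltB : A ⊂ B := lt_of_le_of_ne hsub hAB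
      have hBA : B ∩ A = A := by
        rw [Finset.inter_comm]; exact Finset.inter_eq_left.2 hsub
      have hB : B ∩ A ⊂ B := by rw [hBA]; exact hAltB
      have h0 := my_scalar_core hXmeas hindep hB (hgB2 s) (hgA2 r) (hgBmeas s) (hgAmeas r)
        (by rw [hBA]; exact hgBproj A hAltB s)
      rw [← h0]
      exact integral_congr_ae (Filter.Eventually.of_forall fun ω => mul_comm _ _)
  have hint : ∀ r s : Fin q, Integrable (fun ω => gA ω r * gB ω s) μ :=
    fun r s => my_integrable_mul (hgA2 r) (hgB2 s)
  have hrw : ∀ ω, (gA ω) ⬝ᵥ (M *ᵥ gB ω)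
      = ∑ r : Fin q, ∑ s : Fin q, M r s * (gA ω r * gB ω s) := by
    intro ω
    simp only [dotProduct, mulVec, Finset.mul_sum]
    refine Finset.sum_congr rfl fun r _ => Finset.sum_congr rfl fun s _ => by ring
  calc ∫ ω, (gA ω) ⬝ᵥ (M *ᵥ gB ω) ∂μ
      = ∫ ω, ∑ r : Fin q, ∑ s : Fin q, M r s * (gA ω r * gB ω s) ∂μ := by
        exact integral_congr_ae (Filter.Eventually.of_forall hrw)
    _ = ∑ r : Fin q, ∫ ω, ∑ s : Fin q, M r s * (gA ω r * gB ω s) ∂μ :=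
        integral_finset_sum _ fun r _ =>
          integrable_finset_sum _ fun s _ => (hint r s).const_mul _
    _ = ∑ r : Fin q, ∑ s : Fin q, ∫ ω, M r s * (gA ω r * gB ω s) ∂μ :=
        Finset.sum_congr rfl fun r _ =>
          integral_finset_sum _ fun s _ => (hint r s).const_mul _
    _ = 0 := by
        refine Finset.sum_eq_zero fun r _ => Finset.sum_eq_zero fun s _ => ?_
        rw [integral_const_mul, hzero r s, mul_zero]
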